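/- Under the hypotheses of the n-nomial model (n > 2, m₁ > ... > mₙ > 0, m_{s−1} > 1+r > m_s, 1+r ≠ mₙ), the lower envelope Q̲ can be written as Q̲ = αN₁ + (1−α)N₂, where α = ((1+r)−mₙ)/(m₁−mₙ) ∈ (0,1) and N₁, N₂ are necessity measures on the power set of Ω (capacities satisfying N(A∩B) = min{N(A), N(B)} for all A, B). -/

import Mathlib

lemma frac_mono_aux (c M x y : ℝ) (hxy : y ≤ x) (hxM : x < M) (hcM : c ≤ M) :
    (c - x)/(M - x) ≤ (c - y)/(M - y) := by
  have hx : 0 < M - x := by linarith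
  have hy : 0 < M - y := by linarith
  rw [div_le_div_iff₀ hx hy]
  nlinarith [mul_nonneg (sub_nonneg.2 hxy) (sub_nonneg.2 hcM)]

lemma frac_mono_aux' (c L x y : ℝ) (hxy : y ≤ x) (hLy : L < y) (hLc : L ≤ c) :
    (y - c)/(y - L) ≤ (x - c)/(x - L) := by
  have hy : 0 < y - L := by linarith
  have hx : 0 < x - L := by linarith
  rw [div_le_div_iff₀ hy hx]
  nlinarith [mul_nonneg (sub_nonneg.2 hxy) (sub_nonneg.2 hLc)]

lemma pair_feasible {n : ℕ} (m : Fin n → ℝ) (c : ℝ) (i j : Fin n) (hij : i ≠ j)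
    (hjc : m j < c) (hic : c < m i) :
    ∃ q : Fin n → ℝ, (∀ k, 0 ≤ q k) ∧ (∑ k, q k) = 1 ∧ (∑ k, m k * q k) = c ∧
      ∀ A : Finset (Fin n), ∑ k ∈ A, q k =
        (if i ∈ A then (c - m j)/(m i - m j) else 0) +
        (if j ∈ A then (m i - c)/(m i - m j) else 0) := by
  have hd : 0 < m i - m j := by linarith
  refine ⟨fun k => (if k = i then (c - m j)/(m i - m j) else 0) +
      (if k = j then (m i - c)/(m i - m j) else 0), ?_, ?_, ?_, ?_⟩
  · intro k
    have h1 : (0:ℝ) ≤ (c - m j)/(m i - m j) := div_nonneg (by linarith) hd.le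
    have h2 : (0:ℝ) ≤ (m i - c)/(m i - m j) := div_nonneg (by linarith) hd.le
    positivity
  · rw [Finset.sum_add_distrib]
    simp only [Finset.sum_ite_eq', Finset.mem_univ, if_true]
    rw [← add_div]
    field_simp
    ring
  · have hpt : ∀ k, m k * ((if k = i then (c - m j)/(m i - m j) else 0) +
        (if k = j then (m i - c)/(m i - m j) else 0)) =
        (if k = i then m i * ((c - m j)/(m i - m j)) else 0) +
        (if k = j then m j * ((m i - c)/(m i - m j)) else 0) := by
      intro k
      by_cases h1 : k = i
      · subst h1; rw [if_pos rfl, if_pos rfl, if_neg hij, if_neg hij]; ring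
      · by_cases h2 : k = j
        · subst h2; rw [if_neg h1, if_neg h1, if_pos rfl, if_pos rfl]; ring
        · simp [h1, h2]
    simp only [hpt]
    rw [Finset.sum_add_distrib]
    simp only [Finset.sum_ite_eq', Finset.mem_univ, if_true]
    field_simp
    ring
  · intro A
    rw [Finset.sum_add_distrib]
    simp only [Finset.sum_ite_eq']

lemma lb_upper {n : ℕ} (m : Fin n → ℝ) (c M0 Mj : ℝ) (q : Fin n → ℝ)
    (hq0 : ∀ k, 0 ≤ q k) (hq1 : ∑ k, q k = 1) (hqm : ∑ k, m k * q k = c)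
    (A : Finset (Fin n)) (hA : ∀ k ∈ A, m k ≤ M0) (hAc : ∀ k ∉ A, m k ≤ Mj)
    (hlt : Mj < M0) : (c - Mj)/(M0 - Mj) ≤ ∑ k ∈ A, q k := by
  set t := ∑ k ∈ A, q k with ht
  have hcompl : ∑ k ∈ Aᶜ, q k = 1 - t := by
    have := Finset.sum_add_sum_compl A q
    rw [hq1] at this; linarith
  have h1 : ∑ k ∈ A, m k * q k ≤ M0 * t := by
    rw [ht, Finset.mul_sum]
    exact Finset.sum_le_sum fun k hk => mul_le_mul_of_nonneg_right (hA k hk) (hq0 k)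
  have h2 : ∑ k ∈ Aᶜ, m k * q k ≤ Mj * (1 - t) := by
    rw [← hcompl, Finset.mul_sum]
    exact Finset.sum_le_sum fun k hk => mul_le_mul_of_nonneg_right
      (hAc k (Finset.mem_compl.1 hk)) (hq0 k)
  have h3 : c ≤ M0 * t + Mj * (1 - t) := by
    have := Finset.sum_add_sum_compl A (fun k => m k * q k)
    rw [hqm] at this; linarith
  rw [div_le_iff₀ (by linarith)]
  nlinarith

lemma lb_lower {n : ℕ} (m : Fin n → ℝ) (c ML Mi : ℝ) (q : Fin n → ℝ)
    (hq0 : ∀ k, 0 ≤ q k) (hq1 : ∑ k, q k = 1) (hqm : ∑ k, m k * q k = c)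
    (A : Finset (Fin n)) (hA : ∀ k ∈ A, ML ≤ m k) (hAc : ∀ k ∉ A, Mi ≤ m k)
    (hlt : ML < Mi) : (Mi - c)/(Mi - ML) ≤ ∑ k ∈ A, q k := by
  set t := ∑ k ∈ A, q k with ht
  have hcompl : ∑ k ∈ Aᶜ, q k = 1 - t := by
    have := Finset.sum_add_sum_compl A q
    rw [hq1] at this; linarith
  have h1 : ML * t ≤ ∑ k ∈ A, m k * q k := by
    rw [ht, Finset.mul_sum]
    exact Finset.sum_le_sum fun k hk => mul_le_mul_of_nonneg_right (hA k hk) (hq0 k)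
  have h2 : Mi * (1 - t) ≤ ∑ k ∈ Aᶜ, m k * q k := by
    rw [← hcompl, Finset.mul_sum]
    exact Finset.sum_le_sum fun k hk => mul_le_mul_of_nonneg_right
      (hAc k (Finset.mem_compl.1 hk)) (hq0 k)
  have h3 : ML * t + Mi * (1 - t) ≤ c := by
    have := Finset.sum_add_sum_compl A (fun k => m k * q k)
    rw [hqm] at this; linarith
  rw [div_le_iff₀ (by linarith)]
  nlinarith

/-- A necessity measure on the power set of `Fin n`. -/
def IsNecessity {n : ℕ} (N : Finset (Fin n) → ℝ) : Prop :=
  N ∅ = 0 ∧ N Finset.univ = 1 ∧ (∀ A B : Finset (Fin n), A ⊆ B → N A ≤ N B) ∧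
    ∀ A B : Finset (Fin n), N (A ∩ B) = min (N A) (N B)

lemma compl_min_inter {n : ℕ} (A B : Finset (Fin n)) :
    ((A ∩ B)ᶜ).min = min (Aᶜ.min) (Bᶜ.min) := by
  apply le_antisymm
  · exact le_min
      (Finset.min_mono (Finset.compl_subset_compl.mpr Finset.inter_subset_left))
      (Finset.min_mono (Finset.compl_subset_compl.mpr Finset.inter_subset_right))
  · apply Finset.le_min
    intro a ha
    rw [Finset.mem_compl, Finset.mem_inter, not_and_or] at ha
    rcases ha with ha | ha
    · exact le_trans (min_le_left _ _) (Finset.min_le (Finset.mem_compl.mpr ha))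
    · exact le_trans (min_le_right _ _) (Finset.min_le (Finset.mem_compl.mpr ha))

lemma compl_max_inter {n : ℕ} (A B : Finset (Fin n)) :
    ((A ∩ B)ᶜ).max = max (Aᶜ.max) (Bᶜ.max) := by
  apply le_antisymm
  · apply Finset.max_le
    intro a ha
    rw [Finset.mem_compl, Finset.mem_inter, not_and_or] at ha
    rcases ha with ha | ha
    · exact le_trans (Finset.le_max (Finset.mem_compl.mpr ha)) (le_max_left _ _)
    · exact le_trans (Finset.le_max (Finset.mem_compl.mpr ha)) (le_max_right _ _)
  · exact max_le
      (Finset.max_mono (Finset.compl_subset_compl.mpr Finset.inter_subset_left))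
      (Finset.max_mono (Finset.compl_subset_compl.mpr Finset.inter_subset_right))

lemma isNecessity_of_min {n : ℕ} (G : WithTop (Fin n) → ℝ) (hG : Monotone G)
    (h0 : G ((Finset.univ : Finset (Fin n)).min) = 0) (h1 : G ⊤ = 1) :
    IsNecessity (fun A => G (Aᶜ.min)) := by
  refine ⟨?_, ?_, ?_, ?_⟩
  · simp only [Finset.compl_empty]; exact h0
  · simp only [Finset.compl_univ, Finset.min_empty]; exact h1
  · intro A B hAB
    exact hG (Finset.min_mono (Finset.compl_subset_compl.mpr hAB))
  · intro A B
    simp only [compl_min_inter, hG.map_min]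

lemma isNecessity_of_max {n : ℕ} (H : WithBot (Fin n) → ℝ) (hH : Antitone H)
    (h0 : H ((Finset.univ : Finset (Fin n)).max) = 0) (h1 : H ⊥ = 1) :
    IsNecessity (fun A => H (Aᶜ.max)) := by
  refine ⟨?_, ?_, ?_, ?_⟩
  · simp only [Finset.compl_empty]; exact h0
  · simp only [Finset.compl_univ, Finset.max_empty]; exact h1
  · intro A B hAB
    exact hH (Finset.max_mono (Finset.compl_subset_compl.mpr hAB))
  · intro A B
    simp only [compl_max_inter, hH.map_max]

/-- G function built from values on coercions. -/
def Gfun {n : ℕ} (s : ℕ) (v : Fin n → ℝ) : WithTop (Fin n) → ℝ :=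
  WithTop.recTopCoe 1 (fun k => if k.val < s then 0 else v k)

@[simp] lemma Gfun_top {n : ℕ} (s : ℕ) (v : Fin n → ℝ) : Gfun s v ⊤ = 1 := rfl

@[simp] lemma Gfun_coe {n : ℕ} (s : ℕ) (v : Fin n → ℝ) (k : Fin n) :
    Gfun s v ↑k = if k.val < s then 0 else v k := rfl

def Hfun {n : ℕ} (s : ℕ) (w : Fin n → ℝ) : WithBot (Fin n) → ℝ :=
  WithBot.recBotCoe 1 (fun k => if k.val < s then w k else 0)

@[simp] lemma Hfun_bot {n : ℕ} (s : ℕ) (w : Fin n → ℝ) : Hfun s w ⊥ = 1 := rfl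

@[simp] lemma Hfun_coe {n : ℕ} (s : ℕ) (w : Fin n → ℝ) (k : Fin n) :
    Hfun s w ↑k = if k.val < s then w k else 0 := rfl

lemma Gfun_mono {n : ℕ} (s : ℕ) (v : Fin n → ℝ)
    (h0 : ∀ k : Fin n, s ≤ k.val → 0 ≤ v k)
    (hmono : ∀ k k' : Fin n, s ≤ k.val → k ≤ k' → v k ≤ v k')
    (hle1 : ∀ k : Fin n, s ≤ k.val → v k ≤ 1) :
    Monotone (Gfun s v) := by
  have hφ1 : ∀ k : Fin n, Gfun s v ↑k ≤ 1 := by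
    intro k
    rw [Gfun_coe]
    split_ifs with h
    · norm_num
    · exact hle1 k (le_of_not_gt h)
  intro a b hab
  induction b using WithTop.recTopCoe with
  | top => induction a using WithTop.recTopCoe with
    | top => exact le_refl _
    | coe k => rw [Gfun_top]; exact hφ1 k
  | coe k' =>
    induction a using WithTop.recTopCoe with
    | top => exact absurd hab (by simp)
    | coe k =>
      have hkk' : k ≤ k' := WithTop.coe_le_coe.1 hab
      have hkkv : k.val ≤ k'.val := hkk'
      rw [Gfun_coe, Gfun_coe]
      by_cases h' : k'.val < s
      · rw [if_pos h', if_pos (by omega)]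
      · rw [if_neg h']
        by_cases h : k.val < s
        · rw [if_pos h]; exact h0 k' (le_of_not_gt h')
        · rw [if_neg h]; exact hmono k k' (le_of_not_gt h) hkk'

lemma Hfun_anti {n : ℕ} (s : ℕ) (w : Fin n → ℝ)
    (h0 : ∀ k : Fin n, k.val < s → 0 ≤ w k)
    (hanti : ∀ k k' : Fin n, k'.val < s → k ≤ k' → w k' ≤ w k)
    (hle1 : ∀ k : Fin n, k.val < s → w k ≤ 1) :
    Antitone (Hfun s w) := by
  have hψ1 : ∀ k : Fin n, Hfun s w ↑k ≤ 1 := by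
    intro k
    rw [Hfun_coe]
    split_ifs with h
    · exact hle1 k h
    · norm_num
  intro a b hab
  induction a using WithBot.recBotCoe with
  | bot => induction b using WithBot.recBotCoe with
    | bot => exact le_refl _
    | coe k => rw [Hfun_bot]; exact hψ1 k
  | coe k =>
    induction b using WithBot.recBotCoe with
    | bot => exact absurd hab (by simp)
    | coe k' =>
      have hkk' : k ≤ k' := WithBot.coe_le_coe.1 hab
      have hkkv : k.val ≤ k'.val := hkk'
      rw [Hfun_coe, Hfun_coe]
      by_cases h : k.val < s
      · rw [if_pos h]
        by_cases h' : k'.val < s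
        · rw [if_pos h']; exact hanti k k' h' hkk'
        · rw [if_neg h']; exact h0 k h
      · rw [if_neg h, if_neg (by omega : ¬ k'.val < s)]

lemma univ_min_fin {n : ℕ} (h : 0 < n) :
    (Finset.univ : Finset (Fin n)).min = ((⟨0, h⟩ : Fin n) : WithTop (Fin n)) := by
  apply le_antisymm
  · exact Finset.min_le (Finset.mem_univ _)
  · exact Finset.le_min fun b _ => WithTop.coe_le_coe.2 (by simp [Fin.le_def])

lemma univ_max_fin {n : ℕ} (h : n - 1 < n) :
    (Finset.univ : Finset (Fin n)).max = ((⟨n - 1, h⟩ : Fin n) : WithBot (Fin n)) := by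
  apply le_antisymm
  · exact Finset.max_le fun b _ => WithBot.coe_le_coe.2 (by simp [Fin.le_def]; omega)
  · exact Finset.le_max (Finset.mem_univ _)

/-- The lower envelope of the martingale measures in the n-nomial model is a strict
convex combination `α N₁ + (1-α) N₂` of two necessity measures, with
`α = ((1+r) - mₙ)/(m₁ - mₙ) ∈ (0,1)`. -/
theorem lower_envelope_convex_combination_of_necessities (n : ℕ) (hn : 2 < n)
    (m : Fin n → ℝ) (hm : StrictAnti m) (hmpos : ∀ k, 0 < m k) (r : ℝ)
    (s : Fin n) (hs : 1 ≤ s.val)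
    (h1 : 1 + r < m ⟨s.val - 1, Nat.lt_of_le_of_lt (Nat.sub_le _ _) s.isLt⟩)
    (h2 : m s < 1 + r)
    (hrn : 1 + r ≠ m ⟨n - 1, by omega⟩)
    (Qlow : Finset (Fin n) → ℝ)
    (hQlow : ∀ A : Finset (Fin n),
      IsLeast {x : ℝ | ∃ q : Fin n → ℝ, (∀ k, 0 ≤ q k) ∧ (∑ k, q k) = 1 ∧
        (∑ k, m k * q k) = 1 + r ∧ x = ∑ k ∈ A, q k} (Qlow A)) :
    let α : ℝ := ((1 + r) - m ⟨n - 1, by omega⟩) / (m ⟨0, by omega⟩ - m ⟨n - 1, by omega⟩)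
    0 < α ∧ α < 1 ∧
      ∃ N₁ N₂ : Finset (Fin n) → ℝ, IsNecessity N₁ ∧ IsNecessity N₂ ∧
        ∀ A : Finset (Fin n), Qlow A = α * N₁ A + (1 - α) * N₂ A := by
  intro α
  have h0n : 0 < n := by omega
  have hn1 : n - 1 < n := by omega
  set i0 : Fin n := ⟨0, h0n⟩ with hi0def
  set iN : Fin n := ⟨n - 1, hn1⟩ with hiNdef
  have hαdef : α = ((1 + r) - m iN) / (m i0 - m iN) := rfl
  have hanti : Antitone m := hm.antitone
  -- basic m comparisons
  have hkL : ∀ k : Fin n, k.val < s.val → 1 + r < m k := by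
    intro k hk
    refine lt_of_lt_of_le h1 (hanti ?_)
    simp only [Fin.le_def]
    omega
  have hkR : ∀ k : Fin n, s ≤ k → m k < 1 + r :=
    fun k hk => lt_of_le_of_lt (hanti hk) h2
  have hk0 : ∀ k : Fin n, 0 < k.val → m k < m i0 := by
    intro k hk
    exact hm (by simpa [Fin.lt_def, hi0def] using hk)
  have hkN : ∀ k : Fin n, m iN ≤ m k := by
    intro k
    refine hanti ?_
    simp only [Fin.le_def, hiNdef]
    omega
  have hc0 : 1 + r < m i0 := hkL i0 (by simpa [hi0def] using Nat.lt_of_lt_of_le Nat.zero_lt_one hs)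
  have hNc : m iN < 1 + r := hkR iN (by simp [Fin.le_def, hiNdef]; omega)
  have hden : 0 < m i0 - m iN := by linarith
  have hα0 : 0 < α := by rw [hαdef]; exact div_pos (by linarith) hden
  have hα1 : α < 1 := by
    rw [hαdef, div_lt_one hden]; linarith
  have h1α : 1 - α = (m i0 - (1 + r)) / (m i0 - m iN) := by
    rw [hαdef]; field_simp
    ring
  -- the fraction functions
  set f : Fin n → ℝ := fun k => ((1 + r) - m k) / (m i0 - m k) with hfdef
  set g : Fin n → ℝ := fun k => (m k - (1 + r)) / (m k - m iN) with hgdef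
  have hαf : α = f iN := rfl
  -- properties needed for G
  have hf0 : ∀ k : Fin n, s.val ≤ k.val → 0 ≤ f k / α := by
    intro k hk
    have h1' : m k < 1 + r := hkR k hk
    have h2' : m k < m i0 := hk0 k (by omega)
    exact div_nonneg (div_nonneg (by linarith) (by linarith)) hα0.le
  have hfmono : ∀ k k' : Fin n, s.val ≤ k.val → k ≤ k' → f k / α ≤ f k' / α := by
    intro k k' hk hkk'
    have hff : f k ≤ f k' := frac_mono_aux (1 + r) (m i0) (m k) (m k') (hanti hkk')
      (hk0 k (by omega)) hc0.le
    have := mul_le_mul_of_nonneg_right hff (inv_nonneg.2 hα0.le)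
    simpa [div_eq_mul_inv] using this
  have hfle1 : ∀ k : Fin n, s.val ≤ k.val → f k / α ≤ 1 := by
    intro k hk
    rw [div_le_one hα0, hαf]
    exact frac_mono_aux (1 + r) (m i0) (m k) (m iN) (hkN k) (hk0 k (by omega)) hc0.le
  -- properties needed for H
  have hg0 : ∀ k : Fin n, k.val < s.val → 0 ≤ g k / (1 - α) := by
    intro k hk
    have h1' : 1 + r < m k := hkL k hk
    exact div_nonneg (div_nonneg (by linarith) (by linarith)) (by linarith)
  have hganti : ∀ k k' : Fin n, k'.val < s.val → k ≤ k' → g k' / (1 - α) ≤ g k / (1 - α) := by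
    intro k k' hk' hkk'
    have h1' : 1 + r < m k' := hkL k' hk'
    have hgg : g k' ≤ g k := frac_mono_aux' (1 + r) (m iN) (m k) (m k')
      (hanti hkk') (by linarith [hkN k']) hNc.le
    have := mul_le_mul_of_nonneg_right hgg (inv_nonneg.2 (by linarith : (0:ℝ) ≤ 1 - α))
    simpa [div_eq_mul_inv] using this
  have hgle1 : ∀ k : Fin n, k.val < s.val → g k / (1 - α) ≤ 1 := by
    intro k hk
    have h1' : 1 + r < m k := hkL k hk
    rw [div_le_one (by linarith), h1α]
    exact frac_mono_aux' (1 + r) (m iN) (m i0) (m k)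
      (hanti (by rw [Fin.le_def]; exact Nat.zero_le _)) (by linarith [hkN k]) hNc.le
  -- the necessity measures
  set G : WithTop (Fin n) → ℝ := Gfun s.val (fun k => f k / α) with hGdef
  set H : WithBot (Fin n) → ℝ := Hfun s.val (fun k => g k / (1 - α)) with hHdef
  have hGmono : Monotone G := Gfun_mono _ _ hf0 hfmono hfle1
  have hHanti : Antitone H := Hfun_anti _ _ hg0 hganti hgle1
  refine ⟨hα0, hα1, fun A => G (Aᶜ.min), fun A => H (Aᶜ.max), ?_, ?_, ?_⟩
  · refine isNecessity_of_min G hGmono ?_ rfl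
    rw [univ_min_fin h0n, hGdef, Gfun_coe, if_pos (by simpa using Nat.lt_of_lt_of_le Nat.zero_lt_one hs)]
  · refine isNecessity_of_max H hHanti ?_ rfl
    rw [univ_max_fin hn1, hHdef, Hfun_coe, if_neg (by simp; omega)]
  · intro A
    obtain ⟨⟨q0, hq00, hq01, hq0m, hq0A⟩, hlb⟩ := hQlow A
    by_cases hA : A = Finset.univ
    · subst hA
      have hQ1 : Qlow Finset.univ = 1 := by rw [hq0A, hq01]
      rw [hQ1]
      dsimp only
      simp only [Finset.compl_univ, Finset.min_empty, Finset.max_empty]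
      rw [hGdef, hHdef, Gfun_top, Hfun_bot]
      ring
    · have hne : Aᶜ.Nonempty :=
        Finset.nonempty_iff_ne_empty.mpr (fun h => hA ((Finset.compl_eq_empty_iff A).mp h))
      set e : Fin n := Aᶜ.min' hne with hedef
      set E : Fin n := Aᶜ.max' hne with hEdef
      have heA : e ∉ A := Finset.mem_compl.1 (Finset.min'_mem Aᶜ hne)
      have hEA : E ∉ A := Finset.mem_compl.1 (Finset.max'_mem Aᶜ hne)
      have hemin : ∀ k : Fin n, k ∉ A → e ≤ k :=
        fun k hk => Finset.min'_le Aᶜ k (Finset.mem_compl.2 hk)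
      have hEmax : ∀ k : Fin n, k ∉ A → k ≤ E :=
        fun k hk => Finset.le_max' Aᶜ k (Finset.mem_compl.2 hk)
      have heE : e ≤ E := hemin E hEA
      have hminA : Aᶜ.min = (e : WithTop (Fin n)) := (Finset.coe_min' hne).symm
      have hmaxA : Aᶜ.max = (E : WithBot (Fin n)) := (Finset.coe_max' hne).symm
      dsimp only
      rw [hminA, hmaxA, hGdef, hHdef, Gfun_coe, Hfun_coe]
      by_cases hse : s.val ≤ e.val
      · -- all missing indices are on the right; Qlow A = f e
        have hsE : ¬ E.val < s.val := by
          have := heE; rw [Fin.le_def] at this; omega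
        rw [if_neg (not_lt.2 hse), if_neg hsE]
        have hi0A : i0 ∈ A := by
          by_contra h
          have h' : e.val ≤ 0 := Fin.le_def.mp (hemin i0 h)
          omega
        have hmec : m e < 1 + r := hkR e hse
        have hQle : Qlow A ≤ f e := by
          obtain ⟨q, hq0, hq1, hqm, hqA⟩ :=
            pair_feasible m (1 + r) i0 e (by
              intro h
              have h' : (0:ℕ) = e.val := congrArg Fin.val h
              omega) hmec hc0
          refine hlb ⟨q, hq0, hq1, hqm, ?_⟩
          rw [hqA A, if_pos hi0A, if_neg heA, add_zero]
        have hQge : f e ≤ Qlow A := by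
          rw [hq0A]
          refine lb_upper m (1 + r) (m i0) (m e) q0 hq00 hq01 hq0m A ?_ ?_ ?_
          · intro k _
            exact hanti (Fin.le_def.mpr (Nat.zero_le _))
          · intro k hk
            exact hanti (hemin k hk)
          · linarith
        have : Qlow A = f e := le_antisymm hQle hQge
        rw [this, mul_zero, add_zero, mul_div_cancel₀ _ hα0.ne']
      · -- e is on the left
        push_neg at hse
        rw [if_pos hse]
        by_cases hsE : E.val < s.val
        · -- all missing indices on the left; Qlow A = g E
          rw [if_pos hsE]
          have hiNA : iN ∈ A := by
            by_contra h
            have h' : n - 1 ≤ E.val := Fin.le_def.mp (hEmax iN h)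
            have := s.isLt
            omega
          have hmEc : 1 + r < m E := hkL E hsE
          have hQle : Qlow A ≤ g E := by
            obtain ⟨q, hq0, hq1, hqm, hqA⟩ :=
              pair_feasible m (1 + r) E iN (by
                intro h
                have h' : E.val = n - 1 := congrArg Fin.val h
                have := s.isLt
                omega) hNc hmEc
            refine hlb ⟨q, hq0, hq1, hqm, ?_⟩
            rw [hqA A, if_neg hEA, if_pos hiNA, zero_add]
          have hQge : g E ≤ Qlow A := by
            rw [hq0A]
            refine lb_lower m (1 + r) (m iN) (m E) q0 hq00 hq01 hq0m A ?_ ?_ ?_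
            · intro k _; exact hkN k
            · intro k hk
              exact hanti (hEmax k hk)
            · linarith
          have : Qlow A = g E := le_antisymm hQle hQge
          rw [this, mul_zero, zero_add, mul_div_cancel₀ _ (by linarith : (1:ℝ) - α ≠ 0)]
        · -- missing indices on both sides; Qlow A = 0
          rw [if_neg hsE]
          push_neg at hsE
          have heE' : e ≠ E := by
            intro h; rw [h] at hse; omega
          have hQle : Qlow A ≤ 0 := by
            obtain ⟨q, hq0, hq1, hqm, hqA⟩ :=
              pair_feasible m (1 + r) e E heE' (hkR E hsE) (hkL e hse)
            refine hlb ⟨q, hq0, hq1, hqm, ?_⟩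
            rw [hqA A, if_neg heA, if_neg hEA, add_zero]
          have hQge : 0 ≤ Qlow A := by
            rw [hq0A]
            exact Finset.sum_nonneg fun k _ => hq00 k
          have : Qlow A = 0 := le_antisymm hQle hQge
          rw [this, mul_zero, mul_zero, add_zero]
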